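/- Let N ≥ 2 and m = ⌊N/2⌋. Define the skew-symmetric N × N complex matrix W(z) built from 2×2 diagonal blocks ((0, z_j), (−z_j, 0)) for j = 1,…,m (with a final zero row and column if N is odd). Then det(I_N + \bar W(z)ᵀ W(z)) = Π_{j=1}^m (1 + |z_j|²)². Hence log det(I_N + \bar W(z)ᵀ W(z)) = 2 Σ_{j=1}^m log(1 + |z_j|²), so z ↦ W(z) pulls back the Kähler–Einstein potential of SO(2N)/U(N) to twice the product Fubini–Study potential of (ℂP¹)^m. -/

import Mathlib

open scoped Matrix

/-- The skew-symmetric `N × N` matrix built from `2 × 2` diagonal blocks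
`((0, z_j), (−z_j, 0))`, `j = 1, …, ⌊N/2⌋` (with a final zero row and column if `N` is odd),
giving the embedding of `ℂ^{⌊N/2⌋}` into the Alekseevsky–Perelomov coordinates of
`SO(2N)/U(N)`. -/
noncomputable def Wso (N : ℕ) (z : Fin (N / 2) → ℂ) : Matrix (Fin N) (Fin N) ℂ :=
  Matrix.of fun i j =>
    if h : (i : ℕ) % 2 = 0 ∧ (i : ℕ) + 1 = (j : ℕ) then
      z ⟨(i : ℕ) / 2, by have hi := i.isLt; have hj := j.isLt; omega⟩
    else if h' : (j : ℕ) % 2 = 0 ∧ (j : ℕ) + 1 = (i : ℕ) then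
      -z ⟨(j : ℕ) / 2, by have hi := i.isLt; have hj := j.isLt; omega⟩
    else 0

lemma Wso_term (N : ℕ) (z : Fin (N / 2) → ℂ) (i k j : Fin N) :
    star (Wso N z j i) * Wso N z j k =
      if i = k ∧ (j : ℕ) = (if (i:ℕ) % 2 = 0 then (i:ℕ) + 1 else (i:ℕ) - 1) then
        (if h : (i : ℕ) / 2 < N / 2 then (Complex.normSq (z ⟨(i:ℕ)/2, h⟩) : ℂ) else 0)
      else 0 := by
  simp only [Wso, Matrix.of_apply, Fin.ext_iff]
  split_ifs <;>
    first
    | omega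
    | (exfalso; omega)
    | (simp; done)
    | (simp only [show ((j:ℕ)/2) = ((i:ℕ)/2) from by omega, Complex.star_def,
        ← Complex.normSq_eq_conj_mul_self]; done)
    | (simp only [show ((k:ℕ)/2) = ((i:ℕ)/2) from by omega, Complex.star_def, map_neg,
        neg_mul_neg, ← Complex.normSq_eq_conj_mul_self]; done)

lemma Wso_conjTranspose_mul (N : ℕ) (z : Fin (N / 2) → ℂ) :
    (Wso N z)ᴴ * Wso N z =
      Matrix.diagonal (fun i : Fin N =>
        if h : (i : ℕ) / 2 < N / 2 then (Complex.normSq (z ⟨(i:ℕ)/2, h⟩) : ℂ) else 0) := by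
  ext i k
  rw [Matrix.mul_apply]
  simp only [Matrix.conjTranspose_apply]
  rw [Finset.sum_congr rfl (fun j _ => Wso_term N z i k j)]
  by_cases hik : i = k
  · subst hik
    simp only [true_and]
    rw [Matrix.diagonal_apply_eq]
    by_cases hp : (if (i:ℕ) % 2 = 0 then (i:ℕ) + 1 else (i:ℕ) - 1) < N
    · rw [Finset.sum_eq_single (⟨_, hp⟩ : Fin N)]
      · simp
      · intro j _ hj
        rw [if_neg]
        simpa [Fin.ext_iff] using hj
      · simp
    · rw [Finset.sum_eq_zero, dif_neg]
      · have := i.isLt; split_ifs at hp <;> omega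
      · intro j _
        rw [if_neg]
        have := j.isLt
        omega
  · rw [Matrix.diagonal_apply_ne _ hik, Finset.sum_eq_zero]
    intro j _
    rw [if_neg]
    tauto

lemma prod_range_two_mul (m : ℕ) (f : ℕ → ℂ) :
    ∏ i ∈ Finset.range (2 * m), f (i / 2) = ∏ j ∈ Finset.range m, f j ^ 2 := by
  induction m with
  | zero => simp
  | succ m ih =>
    rw [show 2 * (m + 1) = (2 * m + 1) + 1 by ring, Finset.prod_range_succ,
      Finset.prod_range_succ, ih, Finset.prod_range_succ,
      show (2 * m + 1) / 2 = m by omega, show (2 * m) / 2 = m by omega]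
    ring

/-- `W(z)` is skew-symmetric, `det(I_N + \bar W(z)ᵀ W(z)) = ∏ (1 + |z_j|²)²`,
and hence `log det(I_N + \bar W(z)ᵀ W(z)) = 2 ∑ log(1 + |z_j|²)`: the map `z ↦ W(z)` pulls
back the Kähler–Einstein potential of `SO(2N)/U(N)` to twice the product Fubini–Study
potential of `(ℂP¹)^{⌊N/2⌋}`. -/
theorem det_one_add_Wso (N : ℕ) (hN : 2 ≤ N) (z : Fin (N / 2) → ℂ) :
    (Wso N z)ᵀ = -Wso N z ∧
    ((1 : Matrix (Fin N) (Fin N) ℂ) + (Wso N z)ᴴ * Wso N z).det =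
      ∏ j, ((1 + Complex.normSq (z j) : ℝ) : ℂ) ^ 2 ∧
    Real.log (((1 : Matrix (Fin N) (Fin N) ℂ) + (Wso N z)ᴴ * Wso N z).det.re) =
      2 * ∑ j, Real.log (1 + Complex.normSq (z j)) := by
  have hskew : (Wso N z)ᵀ = -Wso N z := by
    ext i j
    simp only [Matrix.transpose_apply, Matrix.neg_apply, Wso, Matrix.of_apply]
    split_ifs <;> first | omega | ring
  -- the determinant
  set f : ℕ → ℂ := fun n =>
    if h : n < N / 2 then ((1 + Complex.normSq (z ⟨n, h⟩) : ℝ) : ℂ) else 1 with hf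
  have hdet : ((1 : Matrix (Fin N) (Fin N) ℂ) + (Wso N z)ᴴ * Wso N z).det =
      ∏ j, ((1 + Complex.normSq (z j) : ℝ) : ℂ) ^ 2 := by
    rw [Wso_conjTranspose_mul, ← Matrix.diagonal_one, Matrix.diagonal_add,
      Matrix.det_diagonal]
    have h1 : ∀ i : Fin N,
        (1 + if h : (i : ℕ) / 2 < N / 2 then (Complex.normSq (z ⟨(i:ℕ)/2, h⟩) : ℂ) else 0)
          = f ((i : ℕ) / 2) := by
      intro i
      by_cases h : (i : ℕ) / 2 < N / 2
      · rw [dif_pos h, hf]; simp only [dif_pos h]; push_cast; ring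
      · rw [dif_neg h, hf]; simp only [dif_neg h]; ring
    rw [Finset.prod_congr rfl (fun i _ => h1 i), Fin.prod_univ_eq_prod_range (fun n => f (n / 2)) N]
    have h2 : ∏ i ∈ Finset.range N, f (i / 2) = ∏ j ∈ Finset.range (N / 2), f j ^ 2 := by
      rcases (show N = 2 * (N / 2) ∨ N = 2 * (N / 2) + 1 by omega) with h | h
      · have h2 := prod_range_two_mul (N / 2) f
        rw [← h] at h2
        exact h2
      · calc ∏ i ∈ Finset.range N, f (i / 2)
            = (∏ i ∈ Finset.range (2 * (N / 2)), f (i / 2)) * f ((2 * (N / 2)) / 2) := by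
              rw [← Finset.prod_range_succ, ← h]
          _ = ∏ j ∈ Finset.range (N / 2), f j ^ 2 := by
              rw [prod_range_two_mul, show (2 * (N / 2)) / 2 = N / 2 by omega]
              simp [hf]
    rw [h2, ← Fin.prod_univ_eq_prod_range (fun n => f n ^ 2) (N / 2)]
    refine Finset.prod_congr rfl fun j _ => ?_
    rw [hf]; simp [j.isLt]
  refine ⟨hskew, hdet, ?_⟩
  have hre : ((1 : Matrix (Fin N) (Fin N) ℂ) + (Wso N z)ᴴ * Wso N z).det.re =
      ∏ j, (1 + Complex.normSq (z j)) ^ 2 := by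
    rw [hdet]
    have : (∏ j, ((1 + Complex.normSq (z j) : ℝ) : ℂ) ^ 2) =
        ((∏ j, (1 + Complex.normSq (z j)) ^ 2 : ℝ) : ℂ) := by push_cast; ring
    rw [this, Complex.ofReal_re]
  rw [hre]
  have hpos : ∀ j : Fin (N / 2), (0 : ℝ) < 1 + Complex.normSq (z j) := fun j => by
    have := Complex.normSq_nonneg (z j); linarith
  rw [Real.log_prod (fun j _ => pow_ne_zero 2 (ne_of_gt (hpos j)))]
  rw [Finset.mul_sum]
  refine Finset.sum_congr rfl fun j _ => ?_
  rw [Real.log_pow]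
  push_cast; ring
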